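/- Let H be a finite nonempty set, h : H → ℝ a function, and η > 0. Define a random variable Y on H by Pr[Y = y] = exp(η·h(y))/C where C = Σ_{y∈H} exp(η·h(y)). Then E[h(Y)] ≥ max_{y∈H} h(y) − (1/η)·ln|H|. -/

import Mathlib

theorem stmt_2 {H : Type*} [Fintype H] [Nonempty H] (h : H → ℝ) (η : ℝ) (hη : 0 < η) :
    (∑ y, (Real.exp (η * h y) / ∑ y', Real.exp (η * h y')) * h y)
      ≥ (Finset.univ.sup' Finset.univ_nonempty h) - (1/η) * Real.log (Fintype.card H) := by
  set C : ℝ := ∑ y', Real.exp (η * h y') with hCdef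
  have hC : 0 < C := Finset.sum_pos (fun y _ => Real.exp_pos _) Finset.univ_nonempty
  set p : H → ℝ := fun y => Real.exp (η * h y) / C with hpdef
  have hp : ∀ y, 0 < p y := fun y => div_pos (Real.exp_pos _) hC
  have hsum : ∑ y, p y = 1 := by
    simp only [hpdef, ← Finset.sum_div]
    exact div_self hC.ne'
  have hlogp : ∀ y, Real.log (p y) = η * h y - Real.log C := fun y => by
    rw [hpdef]
    rw [Real.log_div (Real.exp_ne_zero _) hC.ne', Real.log_exp]
  set M : ℝ := Finset.univ.sup' Finset.univ_nonempty h with hMdef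
  set n : ℝ := (Fintype.card H : ℝ) with hndef
  have hn : 0 < n := by
    simp only [hndef]
    exact_mod_cast Fintype.card_pos
  -- key1 : rewrite expectation
  have key1 : ∑ y, p y * h y = (1/η) * (Real.log C + ∑ y, p y * Real.log (p y)) := by
    have e : ∀ y, p y * h y = (1/η) * (p y * Real.log C + p y * Real.log (p y)) := by
      intro y
      rw [hlogp y]
      field_simp
      ring
    rw [Finset.sum_congr rfl (fun y _ => e y), ← Finset.mul_sum, Finset.sum_add_distrib,
      ← Finset.sum_mul, hsum]
    ring
  -- key2 : log C ≥ η * M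
  have key2 : η * M ≤ Real.log C := by
    obtain ⟨y₀, _, hy₀⟩ := Finset.exists_mem_eq_sup' (Finset.univ_nonempty (α := H)) h
    have h1 : Real.exp (η * M) ≤ C := by
      rw [hMdef, hy₀]
      exact Finset.single_le_sum (fun y _ => (Real.exp_pos (η * h y)).le) (Finset.mem_univ y₀)
    calc η * M = Real.log (Real.exp (η * M)) := (Real.log_exp _).symm
    _ ≤ Real.log C := Real.log_le_log (Real.exp_pos _) h1
  -- key3 : entropy bound
  have key3 : -(Real.log n) ≤ ∑ y, p y * Real.log (p y) := by
    have e : ∀ y, p y - 1/n - p y * Real.log n ≤ p y * Real.log (p y) := by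
      intro y
      have hpos : 0 < 1 / (n * p y) := by positivity
      have l1 : Real.log (1 / (n * p y)) ≤ 1 / (n * p y) - 1 :=
        Real.log_le_sub_one_of_pos hpos
      have l2 : Real.log (1 / (n * p y)) = -(Real.log n + Real.log (p y)) := by
        rw [Real.log_div one_ne_zero (by positivity), Real.log_one,
          Real.log_mul hn.ne' (hp y).ne']
        ring
      rw [l2] at l1
      have := mul_le_mul_of_nonneg_left l1 (hp y).le
      have heq : p y * (1 / (n * p y) - 1) = 1/n - p y := by
        field_simp
        rw [mul_sub, mul_one_div_cancel (hp y).ne']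
      rw [heq] at this
      nlinarith [this]
    have hle : ∑ y : H, (p y - 1/n - p y * Real.log n) ≤ ∑ y, p y * Real.log (p y) :=
      Finset.sum_le_sum (fun y _ => e y)
    have hsum2 : ∑ y : H, (p y - 1/n - p y * Real.log n) = -(Real.log n) := by
      rw [Finset.sum_sub_distrib, Finset.sum_sub_distrib, hsum, ← Finset.sum_mul, hsum,
        Finset.sum_const, Finset.card_univ]
      simp only [hndef, nsmul_eq_mul]
      field_simp
      ring
    linarith [hsum2 ▸ hle]
  -- combine
  have : (1/η) * (η * M - Real.log n) ≤ (1/η) * (Real.log C + ∑ y, p y * Real.log (p y)) := by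
    apply mul_le_mul_of_nonneg_left _ (by positivity)
    linarith
  have hfin : (1/η) * (η * M - Real.log n) = M - (1/η) * Real.log n := by
    field_simp
  rw [ge_iff_le]
  calc M - (1/η) * Real.log n = (1/η) * (η * M - Real.log n) := hfin.symm
  _ ≤ (1/η) * (Real.log C + ∑ y, p y * Real.log (p y)) := this
  _ = ∑ y, p y * h y := key1.symm
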